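/- arXiv:1412.4749 — 2 statements merged into one kernel-verified Lean document; each statement's English description precedes it below -/
import Mathlib

section
/- Let f : ∂Ω₀ → ℝ be Borel measurable, locally bounded, and bounded from below. Then for every point x ∈ ∂Ω₀ the Bellman function attains the boundary value B_{Ω,f}(x) = f(x); that is, the constant function φ ≡ x belongs to A_Ω (giving B_{Ω,f}(x) ≥ f(x)), and strict convexity of the closure of Ω₀ forces any φ ∈ A_Ω with ⟨φ⟩_I = x ∈ ∂Ω₀ to satisfy ⟨f∘φ⟩_I = f(x). -/
open MeasureTheory Set Classical

/-- Average of a vector-valued function over the interval `[a, b]`. -/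
noncomputable def avgV (φ : ℝ → ℝ × ℝ) (a b : ℝ) : ℝ × ℝ :=
  (b - a)⁻¹ • ∫ t in a..b, φ t

/-- The class `A_Ω` of integrable functions on `I = [0,1]` with values (a.e.) in `∂Ω₀`
whose averages over all subintervals of positive length avoid `Ω₁`. -/
def memA (Ω₀ Ω₁ : Set (ℝ × ℝ)) (φ : ℝ → ℝ × ℝ) : Prop :=
  IntegrableOn φ (Icc 0 1) volume ∧
  (∀ᵐ t ∂(volume.restrict (Icc (0:ℝ) 1)), φ t ∈ frontier Ω₀) ∧
  ∀ a b : ℝ, 0 ≤ a → a < b → b ≤ 1 → avgV φ a b ∉ Ω₁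

/-- The average `⟨f ∘ φ⟩_I` over `I = [0,1]` (which has length `1`), as an extended real:
since `f` is bounded from below, non-integrability of `f ∘ φ` means the average is `+∞`. -/

noncomputable def avgF (f : ℝ × ℝ → ℝ) (φ : ℝ → ℝ × ℝ) : EReal :=
  if IntegrableOn (fun t => f (φ t)) (Icc 0 1) volume
  then (((∫ t in Icc (0:ℝ) 1, f (φ t)) : ℝ) : EReal)
  else ⊤

/-- The Bellman function `B_{Ω,f}(x) = sup {⟨f∘φ⟩_I : φ ∈ A_Ω, ⟨φ⟩_I = x}`. -/
noncomputable def bellman (Ω₀ Ω₁ : Set (ℝ × ℝ)) (f : ℝ × ℝ → ℝ) (x : ℝ × ℝ) : EReal :=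
  sSup {y : EReal | ∃ φ, memA Ω₀ Ω₁ φ ∧ avgV φ 0 1 = x ∧ y = avgF f φ}

/-- `G : S → ℝ ∪ {+∞}` is locally concave on `S`: concave on every segment contained in `S`. -/
def LocConcaveOn (S : Set (ℝ × ℝ)) (G : ℝ × ℝ → EReal) : Prop :=
  ∀ x ∈ S, ∀ y ∈ S, segment ℝ x y ⊆ S → ∀ t : ℝ, t ∈ Icc (0:ℝ) 1 →
    ((t : ℝ) : EReal) * G x + ((1 - t : ℝ) : EReal) * G y ≤ G (t • x + (1 - t) • y)

/-- The minimal locally concave majorant `𝔅_{Ω,f}(x) = inf {G(x) : G ∈ Λ_{Ω,f}}`,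
where `Λ_{Ω,f}` consists of the locally concave functions on `Ω = cl(Ω₀ \ Ω₁)`
that majorize `f` on `∂Ω₀`. -/
noncomputable def bellInf (Ω₀ Ω₁ : Set (ℝ × ℝ)) (f : ℝ × ℝ → ℝ) (x : ℝ × ℝ) : EReal :=
  sInf {y : EReal | ∃ G : ℝ × ℝ → EReal,
    LocConcaveOn (closure (Ω₀ \ Ω₁)) G ∧
    (∀ z ∈ frontier Ω₀, (f z : EReal) ≤ G z) ∧ y = G x}

/-- supporting functional at a boundary point of a strictly convex body -/
lemma exists_support (Ω₀ : Set (ℝ × ℝ)) (hΩ₀ne : Ω₀.Nonempty) (hΩ₀open : IsOpen Ω₀)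
    (hΩ₀conv : Convex ℝ Ω₀) (hΩ₀strict : StrictConvex ℝ (closure Ω₀))
    {x : ℝ × ℝ} (hx : x ∈ frontier Ω₀) :
    ∃ L : (ℝ × ℝ) →L[ℝ] ℝ, (∀ z ∈ closure Ω₀, L z ≤ L x) ∧
      (∀ z ∈ closure Ω₀, L z = L x → z = x) := by
  have hxncl : x ∉ Ω₀ := by
    rw [hΩ₀open.frontier_eq] at hx; exact hx.2
  have hxcl : x ∈ closure Ω₀ := hx.1
  obtain ⟨L, hL⟩ := geometric_hahn_banach_open_point hΩ₀conv hΩ₀open hxncl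
  refine ⟨L, ?_, ?_⟩
  · intro z hz
    have hsub : closure Ω₀ ⊆ {w | L w ≤ L x} :=
      closure_minimal (fun a ha => (hL a ha).le) (isClosed_le L.continuous continuous_const)
    exact hsub hz
  · intro z hz hLz
    by_contra hzx
    obtain ⟨a, ha⟩ := hΩ₀ne
    have hLa : L a < L x := hL a ha
    set m := (2⁻¹ : ℝ) • z + (2⁻¹ : ℝ) • x with hm
    have hmint : m ∈ interior (closure Ω₀) :=
      hΩ₀strict hz hxcl hzx (by norm_num) (by norm_num) (by norm_num)
    have hLm : L m = L x := by
      simp only [hm, map_add, L.map_smul]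
      rw [hLz]; ring_nf
    set v := x - a with hv
    have hLv : 0 < L v := by simp [hv, map_sub]; linarith
    -- find δ > 0 with m + δ • v ∈ closure Ω₀
    have hcont : Continuous fun δ : ℝ => m + δ • v := by continuity
    have hnh : {δ : ℝ | m + δ • v ∈ interior (closure Ω₀)} ∈ nhds (0 : ℝ) := by
      apply hcont.continuousAt.preimage_mem_nhds
      simpa using isOpen_interior.mem_nhds hmint
    have h2 : ∀ᶠ δ in nhdsWithin (0:ℝ) (Ioi 0), m + δ • v ∈ interior (closure Ω₀) :=
      mem_nhdsWithin_of_mem_nhds hnh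
    obtain ⟨δ, hδmem, hδpos⟩ := (h2.and eventually_mem_nhdsWithin).exists
    have : L (m + δ • v) ≤ L x := by
      have hsub : closure Ω₀ ⊆ {w | L w ≤ L x} :=
        closure_minimal (fun b hb => (hL b hb).le) (isClosed_le L.continuous continuous_const)
      exact hsub (interior_subset hδmem)
    rw [map_add, L.map_smul, hLm] at this
    rw [smul_eq_mul] at this
    nlinarith [mul_pos (mem_Ioi.mp hδpos) hLv]

/-- any admissible function with boundary average is a.e. constant -/
lemma ae_eq_const (Ω₀ : Set (ℝ × ℝ)) (hΩ₀ne : Ω₀.Nonempty) (hΩ₀open : IsOpen Ω₀)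
    (hΩ₀conv : Convex ℝ Ω₀) (hΩ₀strict : StrictConvex ℝ (closure Ω₀))
    {x : ℝ × ℝ} (hx : x ∈ frontier Ω₀) {φ : ℝ → ℝ × ℝ}
    (hint : IntegrableOn φ (Icc 0 1) volume)
    (hfr : ∀ᵐ t ∂(volume.restrict (Icc (0:ℝ) 1)), φ t ∈ frontier Ω₀)
    (havg : avgV φ 0 1 = x) :
    ∀ᵐ t ∂(volume.restrict (Icc (0:ℝ) 1)), φ t = x := by
  obtain ⟨L, hLle, hLuniq⟩ := exists_support Ω₀ hΩ₀ne hΩ₀open hΩ₀conv hΩ₀strict hx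
  set μ := volume.restrict (Icc (0:ℝ) 1) with hμ
  have hμuniv : μ Set.univ = 1 := by
    rw [hμ, Measure.restrict_apply_univ]; simp
  have hintμ : Integrable φ μ := hint
  have hI : ∫ t, φ t ∂μ = x := by
    have : avgV φ 0 1 = ∫ t in Icc (0:ℝ) 1, φ t := by
      rw [avgV, intervalIntegral.integral_of_le (by norm_num : (0:ℝ) ≤ 1),
        integral_Icc_eq_integral_Ioc]
      norm_num
    rw [← havg, this]
  have hLφint : Integrable (fun t => L (φ t)) μ := L.integrable_comp hintμ
  have hIL : ∫ t, L (φ t) ∂μ = L x := by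
    rw [L.integral_comp_comm hintμ, hI]
  set g : ℝ → ℝ := fun t => L x - L (φ t) with hg
  have hgnn : 0 ≤ᵐ[μ] g := by
    filter_upwards [hfr] with t ht
    have := hLle (φ t) (closure_mono (fun _ h => h) (frontier_subset_closure ht))
    simp [hg]; linarith [hLle (φ t) (frontier_subset_closure ht)]
  have hgint : Integrable g μ := (integrable_const (L x)).sub hLφint
  have hgzero : ∫ t, g t ∂μ = 0 := by
    rw [hg]
    rw [integral_sub (integrable_const _) hLφint, hIL, integral_const, measureReal_def, hμuniv]
    simp
  have hgae : g =ᵐ[μ] 0 := (integral_eq_zero_iff_of_nonneg_ae hgnn hgint).mp hgzero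
  filter_upwards [hfr, hgae] with t ht hgt
  have hLt : L (φ t) = L x := by
    have : L x - L (φ t) = 0 := hgt
    linarith
  exact hLuniq (φ t) (frontier_subset_closure ht) hLt

/-- For every boundary point `x ∈ ∂Ω₀` the Bellman function attains the
boundary value `f(x)`: the constant function `φ ≡ x` belongs to `A_Ω`, strict convexity of
`cl Ω₀` forces any `φ ∈ A_Ω` with `⟨φ⟩_I = x` to satisfy `⟨f∘φ⟩_I = f(x)`, and hence
`B_{Ω,f}(x) = f(x)`. -/
theorem bellman_boundary_value
    (Ω₀ Ω₁ : Set (ℝ × ℝ))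
    (hΩ₀ne : Ω₀.Nonempty) (hΩ₀open : IsOpen Ω₀) (hΩ₀conv : Convex ℝ Ω₀)
    (hΩ₀strict : StrictConvex ℝ (closure Ω₀))
    (hΩ₁open : IsOpen Ω₁) (hΩ₁conv : Convex ℝ Ω₁) (hΩ₁sub : Ω₁ ⊆ Ω₀)
    (hΩ₁strict : StrictConvex ℝ (closure Ω₁))
    (f : ℝ × ℝ → ℝ) (hfmeas : Measurable f)
    (hflocb : ∀ x ∈ frontier Ω₀, ∃ U ∈ nhds x, ∃ C : ℝ, ∀ z ∈ U ∩ frontier Ω₀, f z ≤ C)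
    (hfbelow : ∃ c : ℝ, ∀ z ∈ frontier Ω₀, c ≤ f z)
    (x : ℝ × ℝ) (hx : x ∈ frontier Ω₀) :
    memA Ω₀ Ω₁ (fun _ => x) ∧
    (∀ φ : ℝ → ℝ × ℝ, memA Ω₀ Ω₁ φ → avgV φ 0 1 = x → avgF f φ = ((f x : ℝ) : EReal)) ∧
    bellman Ω₀ Ω₁ f x = ((f x : ℝ) : EReal) := by
  have hxncl : x ∉ Ω₀ := by rw [hΩ₀open.frontier_eq] at hx; exact hx.2
  have hμuniv : (volume.restrict (Icc (0:ℝ) 1)) Set.univ = 1 := by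
    rw [Measure.restrict_apply_univ]; simp
  have havgconst : ∀ a b : ℝ, a < b → avgV (fun _ => x) a b = x := by
    intro a b hab
    rw [avgV, intervalIntegral.integral_const, smul_smul,
      inv_mul_cancel₀ (sub_ne_zero.mpr (ne_of_gt hab)), one_smul]
  have hA : memA Ω₀ Ω₁ (fun _ => x) := by
    refine ⟨?_, Filter.Eventually.of_forall fun _ => hx, ?_⟩
    · exact (integrableOn_const_iff).mpr (Or.inr (by simp))
    · intro a b _ hab _
      rw [havgconst a b hab]
      exact fun h => hxncl (hΩ₁sub h)
  have hpart2 : ∀ φ : ℝ → ℝ × ℝ, memA Ω₀ Ω₁ φ → avgV φ 0 1 = x →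
      avgF f φ = ((f x : ℝ) : EReal) := by
    intro φ hφ havg
    obtain ⟨hint, hfr, _⟩ := hφ
    have hae := ae_eq_const Ω₀ hΩ₀ne hΩ₀open hΩ₀conv hΩ₀strict hx hint hfr havg
    have hfae : (fun t => f (φ t)) =ᵐ[volume.restrict (Icc (0:ℝ) 1)] fun _ => f x := by
      filter_upwards [hae] with t ht; rw [ht]
    have hfint : IntegrableOn (fun t => f (φ t)) (Icc 0 1) volume :=
      (integrable_const (f x)).congr hfae.symm
    rw [avgF, if_pos hfint]
    congr 1
    rw [integral_congr_ae hfae, integral_const, measureReal_def, hμuniv]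
    simp
  refine ⟨hA, hpart2, ?_⟩
  have hset : {y : EReal | ∃ φ, memA Ω₀ Ω₁ φ ∧ avgV φ 0 1 = x ∧ y = avgF f φ}
      = {((f x : ℝ) : EReal)} := by
    ext y
    constructor
    · rintro ⟨φ, hφ, havg, rfl⟩
      exact hpart2 φ hφ havg
    · rintro rfl
      exact ⟨fun _ => x, hA, havgconst 0 1 (by norm_num),
        (hpart2 _ hA (havgconst 0 1 (by norm_num))).symm⟩
  rw [bellman, hset, sSup_singleton]
end

section
/- Let K ⊆ ℝ² be a closed convex set that is strictly convex (the open segment between any two distinct points of K lies in the interior of K). Let φ : [0,1] → ℝ² be integrable with φ(t) ∈ ∂K (the frontier of K) for almost every t ∈ [0,1]. If the average x = ∫₀¹ φ(t) dt lies on the frontier ∂K, then φ(t) = x for almost every t ∈ [0,1]. -/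
open MeasureTheory Set

/-- If `K ⊆ ℝ²` is closed, convex and strictly convex, `φ : [0,1] → ℝ²`
is integrable with values a.e. in `∂K`, and the average `x = ∫₀¹ φ` lies on `∂K`,
then `φ = x` almost everywhere on `[0,1]`. -/
theorem ae_const_of_avg_mem_frontier
    (K : Set (ℝ × ℝ)) (hKclosed : IsClosed K) (hKconv : Convex ℝ K)
    (hKstrict : StrictConvex ℝ K)
    (φ : ℝ → ℝ × ℝ) (hφint : IntegrableOn φ (Icc 0 1) volume)
    (hφbd : ∀ᵐ t ∂(volume.restrict (Icc (0:ℝ) 1)), φ t ∈ frontier K)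
    (x : ℝ × ℝ) (hxavg : x = ∫ t in Icc (0:ℝ) 1, φ t) (hxK : x ∈ frontier K) :
    ∀ᵐ t ∂(volume.restrict (Icc (0:ℝ) 1)), φ t = x := by
  have hKK : frontier K ⊆ K := hKclosed.frontier_subset
  have hxmem : x ∈ K := hKK hxK
  by_cases hint : (interior K).Nonempty
  · -- main case: interior nonempty, supporting hyperplane at x
    have hxni : x ∉ interior K := hxK.2
    obtain ⟨f, hf⟩ := geometric_hahn_banach_open_point (hKconv.interior) isOpen_interior hxni
    obtain ⟨z, hz⟩ := hint
    -- f y ≤ f x for all y ∈ K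
    have hle : ∀ y ∈ K, f y ≤ f x := by
      intro y hy
      by_contra hgt
      push_neg at hgt
      have hzlt : f z < f x := hf z hz
      have hd : (0:ℝ) < f y - f z := by linarith
      set b : ℝ := (f y - f x) / (2 * (f y - f z)) with hbdef
      have hb0 : 0 < b := div_pos (by linarith) (by linarith)
      have hb1 : b < 1 := by
        rw [hbdef, div_lt_one (by linarith)]; linarith
      have hm := hKconv.combo_interior_self_mem_interior hz hy hb0
        (by linarith : (0:ℝ) ≤ 1 - b) (by ring)
      have hlt := hf _ hm
      rw [map_add, f.map_smul, f.map_smul, smul_eq_mul, smul_eq_mul] at hlt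
      have hbval : b * (f y - f z) = (f y - f x) / 2 := by
        rw [hbdef]; field_simp
      nlinarith
    -- key: any point of K with f y = f x equals x
    have hkey : ∀ y ∈ K, f y = f x → y = x := by
      intro y hy hfy
      by_contra hne
      have hm := hKstrict hy hxmem hne (show (0:ℝ) < 1/2 by norm_num)
        (show (0:ℝ) < 1/2 by norm_num) (by norm_num)
      have := hf _ hm
      rw [map_add, f.map_smul, f.map_smul, smul_eq_mul, smul_eq_mul, hfy] at this
      linarith
    -- f ∘ φ integrable, integral equals f x
    have hfint : IntegrableOn (fun t => f (φ t)) (Icc 0 1) volume :=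
      f.integrable_comp hφint
    have hvol : (volume (Icc (0:ℝ) 1)) = 1 := by simp
    have hconst : IntegrableOn (fun _ : ℝ => f x) (Icc 0 1) volume :=
      (integrableOn_const_iff).mpr (Or.inr (by rw [hvol]; exact ENNReal.one_lt_top))
    have hintfφ : ∫ t in Icc (0:ℝ) 1, f (φ t) = f x := by
      rw [hxavg, ← f.integral_comp_comm hφint]
    set g : ℝ → ℝ := fun t => f x - f (φ t) with hg
    have hgint : IntegrableOn g (Icc 0 1) volume := Integrable.sub hconst hfint
    have hgnn : 0 ≤ᵐ[volume.restrict (Icc (0:ℝ) 1)] g := by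
      filter_upwards [hφbd] with t ht
      simp only [hg, Pi.zero_apply, sub_nonneg]
      exact hle _ (hKK ht)
    have hgzero : ∫ t in Icc (0:ℝ) 1, g t = 0 := by
      rw [hg]
      rw [integral_sub hconst hfint, hintfφ, integral_const]
      simp [hvol]
    have hgae : g =ᵐ[volume.restrict (Icc (0:ℝ) 1)] 0 :=
      (integral_eq_zero_iff_of_nonneg_ae hgnn hgint).mp hgzero
    filter_upwards [hφbd, hgae] with t ht hgt
    have : f (φ t) = f x := by
      simp only [hg, Pi.zero_apply] at hgt; linarith
    exact hkey _ (hKK ht) this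
  · -- degenerate case: interior empty ⇒ K subsingleton
    have hsub : ∀ y ∈ K, y = x := by
      intro y hy
      by_contra hne
      have hm := hKstrict hy hxmem hne (show (0:ℝ) < 1/2 by norm_num)
        (show (0:ℝ) < 1/2 by norm_num) (by norm_num)
      exact hint ⟨_, hm⟩
    filter_upwards [hφbd] with t ht
    exact hsub _ (hKK ht)
end
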